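/- Let (T,β) be a rooted tree decomposition of a finite simple graph G, let t be a node of T, and let Z(t) be the set of children of t in T. Then the edge sets E(G_c) for c ∈ Z(t), together with the edge set of G_t[β(t)] (the subgraph of G_t induced on β(t)), are pairwise disjoint, and their union is exactly E(G_t). -/

import Mathlib

/-- `s` is a descendant of `t` in the rooted tree given by the parent map `parent`
(every node is a descendant of itself). -/
def IsDesc {ι : Type*} (parent : ι → ι) (s t : ι) : Prop :=
  ∃ n : ℕ, parent^[n] s = t

/-- A rooted tree decomposition of a graph `G`: a rooted tree, given by a root and a
parent map under which every node reaches the root, together with bags `bag t ⊆ V(G)`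
such that every edge of `G` is contained in some bag, and for every vertex `v` the set of
nodes whose bag contains `v` induces a connected subtree (expressed by convexity along
root-paths together with closure under common ancestors). -/
structure IsRootedTreeDecomp {V ι : Type*} (G : SimpleGraph V) (root : ι) (parent : ι → ι)
    (bag : ι → Set V) : Prop where
  parent_root : parent root = root
  reaches_root : ∀ t : ι, IsDesc parent t root
  edge_covered : ∀ u v : V, G.Adj u v → ∃ t : ι, u ∈ bag t ∧ v ∈ bag t
  convex : ∀ (v : V) (s u t : ι), v ∈ bag s → v ∈ bag t →
    IsDesc parent s u → IsDesc parent u t → v ∈ bag u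
  meet : ∀ (v : V) (s t : ι), v ∈ bag s → v ∈ bag t →
    ∃ u : ι, IsDesc parent s u ∧ IsDesc parent t u ∧ v ∈ bag u

/-- The adhesion `σ(t)`: for a non-root node, `β(t) ∩ β(parent t)`; for the root, `∅`. -/
def adh {V ι : Type*} [DecidableEq ι] (root : ι) (parent : ι → ι) (bag : ι → Set V)
    (t : ι) : Set V :=
  if t = root then ∅ else bag t ∩ bag (parent t)

/-- `γ(t)`: the union of the bags of all descendants of `t`. -/
def gam {V ι : Type*} (parent : ι → ι) (bag : ι → Set V) (t : ι) : Set V :=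
  {v | ∃ s : ι, IsDesc parent s t ∧ v ∈ bag s}

/-- `α(t) = γ(t) \ σ(t)`. -/
def alp {V ι : Type*} [DecidableEq ι] (root : ι) (parent : ι → ι) (bag : ι → Set V)
    (t : ι) : Set V :=
  gam parent bag t \ adh root parent bag t

/-- The graph `G_t`: the subgraph of `G` induced on `γ(t)`, minus all edges with both
endpoints in `σ(t)` (realized as a graph on the vertex set of `G`, whose edges are
exactly those of `G_t`). -/
def Gsub {V ι : Type*} [DecidableEq ι] (G : SimpleGraph V) (root : ι) (parent : ι → ι)
    (bag : ι → Set V) (t : ι) : SimpleGraph V where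
  Adj u v := G.Adj u v ∧ u ∈ gam parent bag t ∧ v ∈ gam parent bag t ∧
    ¬(u ∈ adh root parent bag t ∧ v ∈ adh root parent bag t)
  symm := by
    constructor
    intro u v ⟨h, hu, hv, hn⟩
    exact ⟨h.symm, hv, hu, fun ⟨a, b⟩ => hn ⟨b, a⟩⟩
  loopless := by
    constructor
    intro v hv
    exact hv.1.ne rfl

/-- The graph `G_t[β(t)]`: the subgraph of `G_t` induced on the bag `β(t)`; its edges are
exactly the edges of `G` with both endpoints in `β(t)` but not both endpoints in `σ(t)`. -/
def GsubBag {V ι : Type*} [DecidableEq ι] (G : SimpleGraph V) (root : ι) (parent : ι → ι)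
    (bag : ι → Set V) (t : ι) : SimpleGraph V where
  Adj u v := G.Adj u v ∧ u ∈ bag t ∧ v ∈ bag t ∧
    ¬(u ∈ adh root parent bag t ∧ v ∈ adh root parent bag t)
  symm := by
    constructor
    intro u v ⟨h, hu, hv, hn⟩
    exact ⟨h.symm, hv, hu, fun ⟨a, b⟩ => hn ⟨b, a⟩⟩
  loopless := by
    constructor
    intro v hv
    exact hv.1.ne rfl

/-- The tree decomposition is compact: for every non-root node `t`, the induced subgraph
`G[α(t)]` is connected and `N_G(α(t)) = σ(t)`. -/
def IsCompactDecomp {V ι : Type*} [DecidableEq ι] (G : SimpleGraph V) (root : ι)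
    (parent : ι → ι) (bag : ι → Set V) : Prop :=
  ∀ t : ι, t ≠ root →
    (G.induce (alp root parent bag t)).Connected ∧
    {v | v ∉ alp root parent bag t ∧ ∃ u ∈ alp root parent bag t, G.Adj u v} =
      adh root parent bag t

section Aux

variable {V ι : Type*}

theorem isDesc_refl (parent : ι → ι) (t : ι) : IsDesc parent t t := ⟨0, rfl⟩

theorem isDesc_trans {parent : ι → ι} {a b c : ι} (h1 : IsDesc parent a b)
    (h2 : IsDesc parent b c) : IsDesc parent a c := by
  obtain ⟨n, hn⟩ := h1; obtain ⟨m, hm⟩ := h2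
  exact ⟨m + n, by rw [Function.iterate_add_apply, hn, hm]⟩

theorem root_fixed {parent : ι → ι} {root : ι} (hroot : parent root = root) (k : ℕ) :
    parent^[k] root = root := by
  induction k with
  | zero => rfl
  | succ n ih => rw [Function.iterate_succ_apply', ih, hroot]

theorem isDesc_antisymm {parent : ι → ι} {root : ι} (hroot : parent root = root)
    (hr : ∀ t, IsDesc parent t root) {a b : ι}
    (h1 : IsDesc parent a b) (h2 : IsDesc parent b a) : a = b := by
  obtain ⟨n, hn⟩ := h1; obtain ⟨m, hm⟩ := h2
  rcases Nat.eq_zero_or_pos (m + n) with h0 | hp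
  · have hn0 : n = 0 := by omega
    rw [hn0] at hn; exact hn
  · have hper : ∀ j : ℕ, parent^[(m + n) * j] a = a := by
      intro j; induction j with
      | zero => rfl
      | succ i ih =>
        rw [Nat.mul_succ, Function.iterate_add_apply, Function.iterate_add_apply, hn, hm, ih]
    obtain ⟨k, hk⟩ := hr a
    have hj : (m + n) * (k + 1) ≥ k := by nlinarith
    have hstab : parent^[(m + n) * (k + 1)] a = root := by
      have heq : (m + n) * (k + 1) = ((m + n) * (k + 1) - k) + k := by omega
      rw [heq, Function.iterate_add_apply, hk, root_fixed hroot]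
    have ha : a = root := by rw [← hper (k + 1), hstab]
    have hb : b = root := by rw [← hn, ha, root_fixed hroot]
    rw [ha, hb]

theorem anc_comparable {parent : ι → ι} {s a b : ι}
    (h1 : IsDesc parent s a) (h2 : IsDesc parent s b) :
    IsDesc parent a b ∨ IsDesc parent b a := by
  obtain ⟨n, hn⟩ := h1; obtain ⟨m, hm⟩ := h2
  rcases le_total n m with h | h
  · left; exact ⟨m - n, by rw [← hn, ← Function.iterate_add_apply, Nat.sub_add_cancel h, hm]⟩
  · right; exact ⟨n - m, by rw [← hm, ← Function.iterate_add_apply, Nat.sub_add_cancel h, hn]⟩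

theorem desc_through_parent {parent : ι → ι} {a b : ι} (h : IsDesc parent a b) (hne : a ≠ b) :
    IsDesc parent (parent a) b := by
  obtain ⟨n, hn⟩ := h
  cases n with
  | zero => exact absurd hn hne
  | succ k => exact ⟨k, by rw [← Function.iterate_succ_apply, hn]⟩

theorem child_desc {parent : ι → ι} {c t : ι} (hc : parent c = t) :
    IsDesc parent c t := ⟨1, by simpa using hc⟩

theorem sibling_disjoint {parent : ι → ι} {root : ι} (hroot : parent root = root)
    (hr : ∀ t, IsDesc parent t root) {t c₁ c₂ s : ι}
    (h1 : parent c₁ = t) (h1' : c₁ ≠ t) (h2 : parent c₂ = t) (h2' : c₂ ≠ t)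
    (hne : c₁ ≠ c₂) (hs1 : IsDesc parent s c₁) (hs2 : IsDesc parent s c₂) : False := by
  rcases anc_comparable hs1 hs2 with h | h
  · have ht : IsDesc parent t c₂ := h1 ▸ desc_through_parent h hne
    exact h2' (isDesc_antisymm hroot hr (child_desc h2) ht)
  · have ht : IsDesc parent t c₁ := h2 ▸ desc_through_parent h (Ne.symm hne)
    exact h1' (isDesc_antisymm hroot hr (child_desc h1) ht)

theorem gam_mono {parent : ι → ι} {bag : ι → Set V} {c t : ι} (h : IsDesc parent c t) :
    gam parent bag c ⊆ gam parent bag t := by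
  rintro u ⟨s, hs, hus⟩
  exact ⟨s, isDesc_trans hs h, hus⟩

theorem mem_bag_self {parent : ι → ι} {bag : ι → Set V} {t : ι} {u : V} (h : u ∈ bag t) :
    u ∈ gam parent bag t := ⟨t, isDesc_refl parent t, h⟩

/-- Lemma A: if `u ∈ γ(c)` and `u ∈ β(t)` for `c` a child of `t`, then `u ∈ β(c)`. -/
theorem mem_bag_child {G : SimpleGraph V} {root : ι} {parent : ι → ι} {bag : ι → Set V}
    (hdec : IsRootedTreeDecomp G root parent bag) {t c : ι} {u : V}
    (hc : parent c = t) (hct : c ≠ t) (hu : u ∈ gam parent bag c) (hut : u ∈ bag t) :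
    u ∈ bag c := by
  obtain ⟨s, hs, hus⟩ := hu
  obtain ⟨w, hsw, htw, huw⟩ := hdec.meet u s t hus hut
  rcases anc_comparable hs hsw with h | h
  · exact hdec.convex u s c w hus huw hs h
  · exact absurd (isDesc_antisymm hdec.parent_root hdec.reaches_root (child_desc hc)
      (isDesc_trans htw h)) hct

theorem child_ne_root {root : ι} {parent : ι → ι} (hroot : parent root = root) {c t : ι}
    (hc : parent c = t) (hct : c ≠ t) : c ≠ root := by
  intro h; subst h; exact hct (hroot.symm.trans hc)

/-- Lemma B: a vertex in `γ(c₁) ∩ γ(c₂)` for distinct children `c₁, c₂` of `t` lies in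
`β(c₁) ∩ β(t)`. -/
theorem mem_sigma_sibling {G : SimpleGraph V} {root : ι} {parent : ι → ι} {bag : ι → Set V}
    (hdec : IsRootedTreeDecomp G root parent bag) {t c₁ c₂ : ι} {u : V}
    (h1 : parent c₁ = t) (h1' : c₁ ≠ t) (h2 : parent c₂ = t) (h2' : c₂ ≠ t)
    (hne : c₁ ≠ c₂) (hu1 : u ∈ gam parent bag c₁) (hu2 : u ∈ gam parent bag c₂) :
    u ∈ bag c₁ ∧ u ∈ bag t := by
  obtain ⟨s₁, hs₁, hus₁⟩ := hu1
  obtain ⟨s₂, hs₂, hus₂⟩ := hu2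
  obtain ⟨w, hs₁w, hs₂w, huw⟩ := hdec.meet u s₁ s₂ hus₁ hus₂
  rcases anc_comparable hs₁ hs₁w with h | h
  · -- IsDesc c₁ w
    have hc₁w : c₁ ≠ w := by
      rintro rfl
      exact sibling_disjoint hdec.parent_root hdec.reaches_root h1 h1' h2 h2' hne hs₂w hs₂
    have htw : IsDesc parent t w := h1 ▸ desc_through_parent h hc₁w
    have hbc₁ : u ∈ bag c₁ := hdec.convex u s₁ c₁ w hus₁ huw hs₁ h
    have hbt : u ∈ bag t := hdec.convex u s₁ t w hus₁ huw
      (isDesc_trans hs₁ (child_desc h1)) htw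
    exact ⟨hbc₁, hbt⟩
  · -- IsDesc w c₁, so s₂ is a descendant of both c₁ and c₂
    exact absurd (isDesc_trans hs₂w h) (fun hh =>
      sibling_disjoint hdec.parent_root hdec.reaches_root h1 h1' h2 h2' hne hh hs₂)

/-- Lemma C: if `u ∈ γ(t) \ β(t)` and `uv` is an edge of `G`, then both `u` and `v`
lie in `γ(c)` for some child `c` of `t`. -/
theorem exists_child_gam {G : SimpleGraph V} [DecidableEq ι] {root : ι} {parent : ι → ι}
    {bag : ι → Set V} (hdec : IsRootedTreeDecomp G root parent bag) {t : ι} {u v : V}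
    (hadj : G.Adj u v) (hu : u ∈ gam parent bag t) (hut : u ∉ bag t) :
    ∃ c : ι, parent c = t ∧ c ≠ t ∧ u ∈ gam parent bag c ∧ v ∈ gam parent bag c := by
  obtain ⟨x, hux, hvx⟩ := hdec.edge_covered u v hadj
  obtain ⟨s, hst, hus⟩ := hu
  obtain ⟨w, hxw, hsw, huw⟩ := hdec.meet u x s hux hus
  rcases anc_comparable hsw hst with h | h
  · -- IsDesc w t
    have hwt : w ≠ t := by rintro rfl; exact hut huw
    obtain ⟨k, hk⟩ := h
    have hex : ∃ k, parent^[k] w = t := ⟨k, hk⟩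
    set k₀ := Nat.find hex with hk₀def
    have hk₀ : parent^[k₀] w = t := Nat.find_spec hex
    have hk₀pos : 0 < k₀ := by
      rcases Nat.eq_zero_or_pos k₀ with h0 | h0
      · rw [h0] at hk₀; exact absurd hk₀ hwt
      · exact h0
    refine ⟨parent^[k₀ - 1] w, ?_, ?_, ?_, ?_⟩
    · have : parent^[(k₀ - 1) + 1] w = t := by rwa [Nat.sub_add_cancel hk₀pos]
      rwa [Function.iterate_succ_apply'] at this
    · intro hh
      exact Nat.find_min hex (m := k₀ - 1) (by omega) hh
    · exact ⟨x, isDesc_trans hxw ⟨k₀ - 1, rfl⟩, hux⟩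
    · exact ⟨x, isDesc_trans hxw ⟨k₀ - 1, rfl⟩, hvx⟩
  · -- IsDesc t w
    exact absurd (hdec.convex u s t w hus huw hst h) hut

theorem adh_subset_bag {root : ι} [DecidableEq ι] {parent : ι → ι} {bag : ι → Set V} {t : ι} :
    adh root parent bag t ⊆ bag t := by
  unfold adh; split
  · exact Set.empty_subset _
  · exact Set.inter_subset_left

theorem mem_adh_child {root : ι} [DecidableEq ι] {parent : ι → ι} (hroot : parent root = root)
    {bag : ι → Set V} {c t : ι} (hc : parent c = t) (hct : c ≠ t) {u : V}
    (h1 : u ∈ bag c) (h2 : u ∈ bag t) : u ∈ adh root parent bag c := by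
  unfold adh
  rw [if_neg (child_ne_root hroot hc hct), hc]
  exact ⟨h1, h2⟩

theorem adh_child_subset {root : ι} [DecidableEq ι] {parent : ι → ι} (hroot : parent root = root)
    {bag : ι → Set V} {c t : ι} (hc : parent c = t) (hct : c ≠ t) :
    adh root parent bag c ⊆ bag t := by
  unfold adh
  rw [if_neg (child_ne_root hroot hc hct), hc]
  exact Set.inter_subset_right

end Aux

/-- in a rooted tree decomposition, for every node `t`, the edge sets
`E(G_c)` for the children `c` of `t`, together with the edge set of `G_t[β(t)]`, are
pairwise disjoint, and their union is exactly `E(G_t)`. -/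
theorem edgeSets_partition {V ι : Type*} [Fintype V] [Fintype ι] [DecidableEq ι]
    (G : SimpleGraph V) (root : ι) (parent : ι → ι) (bag : ι → Set V)
    (hdec : IsRootedTreeDecomp G root parent bag) (t : ι) :
    (∀ c₁ c₂ : ι, parent c₁ = t → c₁ ≠ t → parent c₂ = t → c₂ ≠ t → c₁ ≠ c₂ →
      Disjoint (Gsub G root parent bag c₁).edgeSet (Gsub G root parent bag c₂).edgeSet) ∧
    (∀ c : ι, parent c = t → c ≠ t →
      Disjoint (Gsub G root parent bag c).edgeSet (GsubBag G root parent bag t).edgeSet) ∧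
    ((⋃ c ∈ {c : ι | parent c = t ∧ c ≠ t}, (Gsub G root parent bag c).edgeSet) ∪
        (GsubBag G root parent bag t).edgeSet = (Gsub G root parent bag t).edgeSet) := by
  have hroot := hdec.parent_root
  have hr := hdec.reaches_root
  refine ⟨?_, ?_, ?_⟩
  · -- pairwise disjointness of children edge sets
    intro c₁ c₂ h1 h1' h2 h2' hne
    rw [Set.disjoint_left]
    intro e he1 he2
    induction e with
    | _ u v =>
      rw [SimpleGraph.mem_edgeSet] at he1 he2
      obtain ⟨hadj, hu1, hv1, hn1⟩ := he1
      obtain ⟨-, hu2, hv2, -⟩ := he2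
      obtain ⟨huc, hut⟩ := mem_sigma_sibling hdec h1 h1' h2 h2' hne hu1 hu2
      obtain ⟨hvc, hvt⟩ := mem_sigma_sibling hdec h1 h1' h2 h2' hne hv1 hv2
      exact hn1 ⟨mem_adh_child hroot h1 h1' huc hut, mem_adh_child hroot h1 h1' hvc hvt⟩
  · -- disjointness of a child edge set from the bag edge set
    intro c hc hct
    rw [Set.disjoint_left]
    intro e he1 he2
    induction e with
    | _ u v =>
      rw [SimpleGraph.mem_edgeSet] at he1 he2
      obtain ⟨hadj, hu1, hv1, hn1⟩ := he1
      obtain ⟨-, hu2, hv2, -⟩ := he2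
      have huc := mem_bag_child hdec hc hct hu1 hu2
      have hvc := mem_bag_child hdec hc hct hv1 hv2
      exact hn1 ⟨mem_adh_child hroot hc hct huc hu2, mem_adh_child hroot hc hct hvc hv2⟩
  · -- union
    ext e
    induction e with
    | _ u v =>
      simp only [Set.mem_union, Set.mem_iUnion, SimpleGraph.mem_edgeSet, Set.mem_setOf_eq,
        exists_prop]
      constructor
      · rintro (⟨c, ⟨hc, hct⟩, hadj, hu, hv, hn⟩ | ⟨hadj, hu, hv, hn⟩)
        · refine ⟨hadj, gam_mono (child_desc hc) hu, gam_mono (child_desc hc) hv, ?_⟩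
          rintro ⟨hut, hvt⟩
          have hut' := adh_subset_bag hut
          have hvt' := adh_subset_bag hvt
          exact hn ⟨mem_adh_child hroot hc hct (mem_bag_child hdec hc hct hu hut') hut',
            mem_adh_child hroot hc hct (mem_bag_child hdec hc hct hv hvt') hvt'⟩
        · exact ⟨hadj, mem_bag_self hu, mem_bag_self hv, hn⟩
      · rintro ⟨hadj, hu, hv, hn⟩
        by_cases hub : u ∈ bag t
        · by_cases hvb : v ∈ bag t
          · exact Or.inr ⟨hadj, hub, hvb, hn⟩
          · obtain ⟨c, hc, hct, hvc, huc⟩ := exists_child_gam hdec hadj.symm hv hvb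
            refine Or.inl ⟨c, ⟨hc, hct⟩, hadj, huc, hvc, ?_⟩
            rintro ⟨-, hva⟩
            exact hvb (adh_child_subset hroot hc hct hva)
        · obtain ⟨c, hc, hct, huc, hvc⟩ := exists_child_gam hdec hadj hu hub
          refine Or.inl ⟨c, ⟨hc, hct⟩, hadj, huc, hvc, ?_⟩
          rintro ⟨hua, -⟩
          exact hub (adh_child_subset hroot hc hct hua)
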